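/- Let E be a finite directed multigraph with adjacency matrix A, assume A is irreducible, and let (β, x) be a Perron–Frobenius pair for A. Fix vertices w₁, w₂ with A(w₁,w₂) ≥ 2. For a vertex v and integers k ≥ 1 and 0 ≤ i ≤ k, let M_{k,v}^i denote the set of paths μ = (μ₁,...,μ_k) of length k with r(μ_k) = v such that exactly i of the edges μ_j satisfy s(μ_j) = w₁ and r(μ_j) = w₂. Then for every fixed vertex v and every fixed integer i ≥ 0, |M_{k,v}^i| / β^k → 0 as k → ∞. -/

import Mathlib

open Filter Finset Matrix

set_option linter.unusedSectionVars false
set_option maxHeartbeats 1000000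

section Aux

attribute [local instance] Classical.propDecidable

variable {V Edge : Type} [Fintype V] [DecidableEq V] [Fintype Edge]

/-- edge weight: special edges (from `w₁` to `w₂`) get weight 1/2, others 1. -/
noncomputable def wt (s r : Edge → V) (w₁ w₂ : V) (e : Edge) : ℝ :=
  if s e = w₁ ∧ r e = w₂ then 1/2 else 1

lemma wt_pos (s r : Edge → V) (w₁ w₂ : V) (e : Edge) : 0 < wt s r w₁ w₂ e := by
  unfold wt; split <;> norm_num

lemma wt_le_one (s r : Edge → V) (w₁ w₂ : V) (e : Edge) : wt s r w₁ w₂ e ≤ 1 := by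
  unfold wt; split <;> norm_num

lemma half_le_wt (s r : Edge → V) (w₁ w₂ : V) (e : Edge) : (1/2 : ℝ) ≤ wt s r w₁ w₂ e := by
  unfold wt; split <;> norm_num

def isPath (s r : Edge → V) (k : ℕ) (μ : Fin k → Edge) : Prop :=
  ∀ (j : ℕ) (h : j + 1 < k), r (μ ⟨j, Nat.lt_of_succ_lt h⟩) = s (μ ⟨j + 1, h⟩)

def endsAt (r : Edge → V) (k : ℕ) (v : V) (μ : Fin k → Edge) : Prop :=
  ∀ j : Fin k, j.val = k - 1 → r (μ j) = v

/-- weighted count of paths of length `k` ending at `v` -/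
noncomputable def pS (s r : Edge → V) (w₁ w₂ : V) (k : ℕ) (v : V) : ℝ :=
  ∑ μ : Fin k → Edge,
    if isPath s r k μ ∧ endsAt r k v μ then ∏ j, wt s r w₁ w₂ (μ j) else 0

lemma pS_nonneg (s r : Edge → V) (w₁ w₂ : V) (k : ℕ) (v : V) : 0 ≤ pS s r w₁ w₂ k v := by
  refine Finset.sum_nonneg fun μ _ => ?_
  split
  · exact Finset.prod_nonneg fun j _ => (wt_pos s r w₁ w₂ (μ j)).le
  · exact le_refl 0

lemma pS_zero (s r : Edge → V) (w₁ w₂ : V) (v : V) : pS s r w₁ w₂ 0 v = 1 := by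
  unfold pS
  rw [Finset.sum_eq_single (fun j : Fin 0 => (j.elim0 : Edge))]
  · have h1 : isPath s r 0 (fun j : Fin 0 => (j.elim0 : Edge)) := fun j h => by omega
    have h2 : endsAt r 0 v (fun j : Fin 0 => (j.elim0 : Edge)) := fun j => j.elim0
    simp [h1, h2]
  · intro μ _ hμ
    exact absurd (funext fun j => j.elim0) hμ
  · intro h
    exact absurd (Finset.mem_univ _) h

def snocEquiv (α : Type) (k : ℕ) : ((Fin k → α) × α) ≃ (Fin (k+1) → α) where
  toFun p := Fin.snoc p.1 p.2
  invFun ν := (Fin.init ν, ν (Fin.last k))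
  left_inv p := by simp
  right_inv ν := by simp

lemma isPath_snoc_iff (s r : Edge → V) (k : ℕ) (μ : Fin k → Edge) (e : Edge) :
    isPath s r (k+1) (Fin.snoc μ e) ↔ isPath s r k μ ∧ endsAt r k (s e) μ := by
  constructor
  · intro H
    constructor
    · intro j h
      have h' : j + 1 < k + 1 := Nat.lt_succ_of_lt h
      have := H j h'
      rwa [show (⟨j, Nat.lt_of_succ_lt h'⟩ : Fin (k+1)) = Fin.castSucc ⟨j, Nat.lt_of_succ_lt h⟩ from rfl,
        show (⟨j+1, h'⟩ : Fin (k+1)) = Fin.castSucc ⟨j+1, h⟩ from rfl,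
        Fin.snoc_castSucc, Fin.snoc_castSucc] at this
    · intro j hj
      have hk : 0 < k := j.pos
      have h' : (k-1) + 1 < k + 1 := by omega
      have := H (k-1) h'
      have e2 : (⟨(k-1)+1, h'⟩ : Fin (k+1)) = Fin.last k := by
        apply Fin.ext; simp; omega
      rw [e2, Fin.snoc_last,
        show (⟨k-1, Nat.lt_of_succ_lt h'⟩ : Fin (k+1)) = Fin.castSucc ⟨k-1, by omega⟩ from rfl,
        Fin.snoc_castSucc] at this
      have e3 : j = (⟨k-1, by omega⟩ : Fin k) := by apply Fin.ext; simpa using hj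
      rw [e3]; exact this
  · rintro ⟨h1, h2⟩ j h
    by_cases hj : j + 1 < k
    · have := h1 j hj
      rwa [show (⟨j, Nat.lt_of_succ_lt h⟩ : Fin (k+1)) = Fin.castSucc ⟨j, Nat.lt_of_succ_lt hj⟩ from rfl,
        show (⟨j+1, h⟩ : Fin (k+1)) = Fin.castSucc ⟨j+1, hj⟩ from rfl,
        Fin.snoc_castSucc, Fin.snoc_castSucc]
    · have hjk : j + 1 = k := by omega
      have e2 : (⟨j+1, h⟩ : Fin (k+1)) = Fin.last k := by apply Fin.ext; simpa using hjk
      rw [e2, Fin.snoc_last,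
        show (⟨j, Nat.lt_of_succ_lt h⟩ : Fin (k+1)) = Fin.castSucc ⟨j, by omega⟩ from rfl,
        Fin.snoc_castSucc]
      exact h2 ⟨j, by omega⟩ (by simp; omega)

lemma endsAt_snoc_iff (r : Edge → V) (k : ℕ) (v : V) (μ : Fin k → Edge) (e : Edge) :
    endsAt r (k+1) v (Fin.snoc μ e) ↔ r e = v := by
  constructor
  · intro H
    have := H (Fin.last k) (by simp)
    rwa [Fin.snoc_last] at this
  · intro H j hj
    have : j = Fin.last k := by apply Fin.ext; simpa using hj
    rw [this, Fin.snoc_last]; exact H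


/-- the weighted transfer operator -/
noncomputable def opL (s r : Edge → V) (w₁ w₂ : V) (y : V → ℝ) (u : V) : ℝ :=
  ∑ e : Edge, if s e = u then wt s r w₁ w₂ e * y (r e) else 0

lemma pS_succ (s r : Edge → V) (w₁ w₂ : V) (k : ℕ) (v : V) :
    pS s r w₁ w₂ (k+1) v
      = ∑ e : Edge, if r e = v then pS s r w₁ w₂ k (s e) * wt s r w₁ w₂ e else 0 := by
  have := (Equiv.sum_comp (snocEquiv Edge k) (fun ν : Fin (k+1) → Edge =>
    if isPath s r (k+1) ν ∧ endsAt r (k+1) v ν then ∏ j, wt s r w₁ w₂ (ν j) else 0)).symm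
  rw [pS, this, Fintype.sum_prod_type]
  rw [Finset.sum_comm]
  refine Finset.sum_congr rfl fun e _ => ?_
  by_cases hre : r e = v
  · simp only [hre, if_true, pS, Finset.sum_mul]
    refine Finset.sum_congr rfl fun μ _ => ?_
    have hcond : (isPath s r (k+1) (Fin.snoc μ e) ∧ endsAt r (k+1) v (Fin.snoc μ e))
        ↔ (isPath s r k μ ∧ endsAt r k (s e) μ) := by
      rw [isPath_snoc_iff, endsAt_snoc_iff, hre]
      tauto
    have hprod : (∏ j, wt s r w₁ w₂ ((Fin.snoc μ e : Fin (k+1) → Edge) j) : ℝ)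
        = (∏ j, wt s r w₁ w₂ (μ j)) * wt s r w₁ w₂ e := by
      rw [Fin.prod_univ_castSucc]
      simp
    simp only [snocEquiv, Equiv.coe_fn_mk]
    rw [hprod]
    by_cases hc : isPath s r k μ ∧ endsAt r k (s e) μ
    · simp only [if_pos hc]; exact if_pos (hcond.mpr hc)
    · simp only [if_neg hc, zero_mul]; exact if_neg (fun hh => hc (hcond.mp hh))
  · simp only [hre, if_false]
    refine Finset.sum_eq_zero fun μ _ => ?_
    simp only [snocEquiv, Equiv.coe_fn_mk]
    refine if_neg ?_
    rintro ⟨-, h2⟩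
    exact hre ((endsAt_snoc_iff r k v μ e).mp h2)

/-- transfer identity for weighted sums against a test vector -/
lemma sum_pS_succ (s r : Edge → V) (w₁ w₂ : V) (k : ℕ) (y : V → ℝ) :
    ∑ u, pS s r w₁ w₂ (k+1) u * y u = ∑ u, pS s r w₁ w₂ k u * opL s r w₁ w₂ y u := by
  simp only [pS_succ, Finset.sum_mul]
  rw [Finset.sum_comm]
  have : ∀ e : Edge,
      (∑ u, (if r e = u then pS s r w₁ w₂ k (s e) * wt s r w₁ w₂ e else 0) * y u)
        = pS s r w₁ w₂ k (s e) * (wt s r w₁ w₂ e * y (r e)) := by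
    intro e
    rw [Finset.sum_eq_single (r e)]
    · simp [mul_assoc]
    · intro u _ hu; rw [if_neg (fun h => hu h.symm), zero_mul]
    · intro h; exact absurd (Finset.mem_univ _) h
  rw [Finset.sum_congr rfl fun e _ => this e]
  -- now regroup by source vertex
  unfold opL
  have h2 : ∀ u : V, pS s r w₁ w₂ k u * (∑ e : Edge, if s e = u then wt s r w₁ w₂ e * y (r e) else 0)
      = ∑ e : Edge, if s e = u then pS s r w₁ w₂ k u * (wt s r w₁ w₂ e * y (r e)) else 0 := by
    intro u
    rw [Finset.mul_sum]
    exact Finset.sum_congr rfl fun e _ => by split <;> simp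
  rw [Finset.sum_congr rfl fun u (_ : u ∈ univ) => h2 u, Finset.sum_comm]
  refine Finset.sum_congr rfl fun e _ => ?_
  rw [Finset.sum_eq_single (s e)]
  · simp
  · intro u _ hu; rw [if_neg (fun h => hu h.symm)]
  · intro h; exact absurd (Finset.mem_univ _) h


noncomputable def Lpow (s r : Edge → V) (w₁ w₂ : V) : ℕ → (V → ℝ) → (V → ℝ)
  | 0, y => y
  | n+1, y => opL s r w₁ w₂ (Lpow s r w₁ w₂ n y)

variable (s r : Edge → V) (w₁ w₂ : V)

lemma Lpow_add (a b : ℕ) (y : V → ℝ) :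
    Lpow s r w₁ w₂ (a + b) y = Lpow s r w₁ w₂ a (Lpow s r w₁ w₂ b y) := by
  induction a with
  | zero => simp [Lpow]
  | succ n ih =>
      have h : n + 1 + b = (n + b) + 1 := by omega
      rw [h]
      show opL s r w₁ w₂ (Lpow s r w₁ w₂ (n + b) y) = _
      rw [ih]
      rfl

lemma opL_mono {y z : V → ℝ} (h : ∀ w, y w ≤ z w) (u : V) :
    opL s r w₁ w₂ y u ≤ opL s r w₁ w₂ z u := by
  refine Finset.sum_le_sum fun e _ => ?_
  split
  · exact mul_le_mul_of_nonneg_left (h _) (wt_pos s r w₁ w₂ e).le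
  · exact le_refl 0

lemma Lpow_mono (n : ℕ) {y z : V → ℝ} (h : ∀ w, y w ≤ z w) (u : V) :
    Lpow s r w₁ w₂ n y u ≤ Lpow s r w₁ w₂ n z u := by
  induction n generalizing u with
  | zero => exact h u
  | succ n ih => exact opL_mono s r w₁ w₂ (fun w => ih w) u

lemma opL_nonneg {y : V → ℝ} (h : ∀ w, 0 ≤ y w) (u : V) : 0 ≤ opL s r w₁ w₂ y u := by
  refine Finset.sum_nonneg fun e _ => ?_
  split
  · exact mul_nonneg (wt_pos s r w₁ w₂ e).le (h _)
  · exact le_refl 0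

lemma Lpow_nonneg (n : ℕ) {y : V → ℝ} (h : ∀ w, 0 ≤ y w) (u : V) :
    0 ≤ Lpow s r w₁ w₂ n y u := by
  induction n generalizing u with
  | zero => exact h u
  | succ n ih => exact opL_nonneg s r w₁ w₂ (fun w => ih w) u

lemma opL_smul (c : ℝ) (y : V → ℝ) (u : V) :
    opL s r w₁ w₂ (fun w => c * y w) u = c * opL s r w₁ w₂ y u := by
  unfold opL
  rw [Finset.mul_sum]
  refine Finset.sum_congr rfl fun e _ => ?_
  split <;> ring

lemma Lpow_smul (n : ℕ) (c : ℝ) (y : V → ℝ) (u : V) :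
    Lpow s r w₁ w₂ n (fun w => c * y w) u = c * Lpow s r w₁ w₂ n y u := by
  induction n generalizing u with
  | zero => rfl
  | succ n ih =>
      show opL s r w₁ w₂ (Lpow s r w₁ w₂ n fun w => c * y w) u = _
      rw [funext fun w => ih w, opL_smul]; rfl

lemma opL_sub (y z : V → ℝ) (u : V) :
    opL s r w₁ w₂ (fun w => y w - z w) u = opL s r w₁ w₂ y u - opL s r w₁ w₂ z u := by
  unfold opL
  rw [← Finset.sum_sub_distrib]
  refine Finset.sum_congr rfl fun e _ => ?_
  split <;> ring

lemma Lpow_sub (n : ℕ) (y z : V → ℝ) (u : V) :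
    Lpow s r w₁ w₂ n (fun w => y w - z w) u
      = Lpow s r w₁ w₂ n y u - Lpow s r w₁ w₂ n z u := by
  induction n generalizing u with
  | zero => rfl
  | succ n ih =>
      show opL s r w₁ w₂ (Lpow s r w₁ w₂ n fun w => y w - z w) u = _
      rw [funext fun w => ih w, opL_sub]; rfl

variable (A : Matrix V V ℝ)

lemma sum_A_eq (hA : ∀ v w, A v w = Nat.card {e : Edge // s e = v ∧ r e = w})
    (y : V → ℝ) (u : V) :
    ∑ w, A u w * y w = ∑ e : Edge, if s e = u then y (r e) else 0 := by
  have h1 : ∀ w, A u w * y w = ∑ e : Edge, if s e = u ∧ r e = w then y w else 0 := by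
    intro w
    have hc : A u w = ((univ.filter (fun e : Edge => s e = u ∧ r e = w)).card : ℝ) := by
      rw [hA]; norm_cast
      rw [Nat.card_eq_fintype_card, Fintype.card_subtype]
    rw [hc, ← Finset.sum_filter, Finset.sum_const, nsmul_eq_mul]
  rw [Finset.sum_congr rfl fun w _ => h1 w, Finset.sum_comm]
  refine Finset.sum_congr rfl fun e _ => ?_
  by_cases h : s e = u
  · simp [h, Finset.sum_ite_eq]
  · simp [h]

lemma A_nonneg (hA : ∀ v w, A v w = Nat.card {e : Edge // s e = v ∧ r e = w}) :
    ∀ u w, 0 ≤ A u w := by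
  intro u w; rw [hA]; positivity

lemma Apow_nonneg (hA : ∀ v w, A v w = Nat.card {e : Edge // s e = v ∧ r e = w}) :
    ∀ (n : ℕ) (u w : V), 0 ≤ (A ^ n) u w := by
  intro n
  induction n with
  | zero => intro u w; by_cases h : u = w <;> simp [Matrix.one_apply, h]
  | succ n ih =>
      intro u w
      rw [pow_succ, Matrix.mul_apply]
      exact Finset.sum_nonneg fun t _ => mul_nonneg (ih u t) (A_nonneg s r A hA t w)

lemma opL_ge_half (hA : ∀ v w, A v w = Nat.card {e : Edge // s e = v ∧ r e = w})
    {z : V → ℝ} (hz : ∀ w, 0 ≤ z w) (u : V) :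
    (1/2 : ℝ) * (∑ w, A u w * z w) ≤ opL s r w₁ w₂ z u := by
  rw [sum_A_eq s r A hA z u, Finset.mul_sum]
  refine Finset.sum_le_sum fun e _ => ?_
  split
  · exact mul_le_mul_of_nonneg_right (half_le_wt s r w₁ w₂ e) (hz _)
  · simp

lemma Lpow_ge_half_pow (hA : ∀ v w, A v w = Nat.card {e : Edge // s e = v ∧ r e = w})
    {y : V → ℝ} (hy : ∀ w, 0 ≤ y w) (n : ℕ) (u : V) :
    (1/2 : ℝ)^n * ((A ^ n) *ᵥ y) u ≤ Lpow s r w₁ w₂ n y u := by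
  induction n generalizing u with
  | zero => simp [Matrix.one_mulVec, Lpow]
  | succ n ih =>
      have hAy : ∀ w, 0 ≤ ((A ^ n) *ᵥ y) w := fun w =>
        Finset.sum_nonneg fun t _ => mul_nonneg (Apow_nonneg s r A hA n w t) (hy t)
      have step1 : opL s r w₁ w₂ (fun w => (1/2:ℝ)^n * ((A ^ n) *ᵥ y) w) u
          ≤ Lpow s r w₁ w₂ (n+1) y u := by
        exact opL_mono s r w₁ w₂ (fun w => ih w) u
      refine le_trans ?_ step1
      rw [opL_smul]
      have h3 : (1/2:ℝ) * (∑ w, A u w * ((A ^ n) *ᵥ y) w) ≤ opL s r w₁ w₂ ((A ^ n) *ᵥ y) u :=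
        opL_ge_half s r w₁ w₂ A hA hAy u
      have h4 : (∑ w, A u w * ((A ^ n) *ᵥ y) w) = ((A ^ (n+1)) *ᵥ y) u := by
        rw [pow_succ']
        rw [← Matrix.mulVec_mulVec]
        rfl
      calc (1/2:ℝ)^(n+1) * ((A ^ (n+1)) *ᵥ y) u
          = (1/2:ℝ)^n * ((1/2:ℝ) * ((A ^ (n+1)) *ᵥ y) u) := by ring
        _ ≤ (1/2:ℝ)^n * opL s r w₁ w₂ ((A ^ n) *ᵥ y) u := by
            refine mul_le_mul_of_nonneg_left ?_ (by positivity)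
            rw [← h4]; exact h3

section Eigen
variable (β : ℝ) (x : V → ℝ)

lemma opL_x_le' (hA : ∀ v w, A v w = Nat.card {e : Edge // s e = v ∧ r e = w})
    (hx : ∀ v, 0 < x v) (hPF : ∀ v, ∑ w, A v w * x w = β * x v)
    (h2 : (2 : ℝ) ≤ A w₁ w₂) (u : V) :
    opL s r w₁ w₂ x u ≤ β * x u - (x w₂) * (if u = w₁ then 1 else 0) := by
  have hsum : (∑ e : Edge, if s e = u then x (r e) else 0) = β * x u := by
    rw [← sum_A_eq s r A hA x u]; exact hPF u
  by_cases hu : u = w₁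
  · subst hu
    have key : ∀ e : Edge,
        (if s e = u ∧ r e = w₂ then (1/2 : ℝ) * x w₂ else 0)
          ≤ (if s e = u then x (r e) else 0)
            - (if s e = u then wt s r u w₂ e * x (r e) else 0) := by
      intro e
      by_cases h1 : s e = u
      · by_cases hrw : r e = w₂
        · have hcond : s e = u ∧ r e = w₂ := ⟨h1, hrw⟩
          rw [if_pos hcond, if_pos h1, if_pos h1]
          have hwt : wt s r u w₂ e = 1/2 := by rw [wt, if_pos hcond]
          rw [hwt, hrw]
          linarith [hx w₂]
        · have hcond : ¬(s e = u ∧ r e = w₂) := fun hh => hrw hh.2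
          simp only [wt, if_neg hcond, if_pos h1, one_mul, sub_self, le_refl]
      · have hcond : ¬(s e = u ∧ r e = w₂) := fun hh => h1 hh.1
        simp only [if_neg hcond, if_neg h1, sub_zero, le_refl]
    have hsum2 : (∑ e : Edge, if s e = u ∧ r e = w₂ then (1/2 : ℝ) * x w₂ else 0)
        ≤ β * x u - opL s r u w₂ x u := by
      rw [← hsum]
      unfold opL
      rw [← Finset.sum_sub_distrib]
      exact Finset.sum_le_sum fun e _ => key e
    have hcard : (∑ e : Edge, if s e = u ∧ r e = w₂ then (1/2 : ℝ) * x w₂ else 0)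
        = A u w₂ * ((1/2 : ℝ) * x w₂) := by
      rw [← Finset.sum_filter, Finset.sum_const, nsmul_eq_mul, hA]
      norm_cast
      rw [Nat.card_eq_fintype_card, Fintype.card_subtype]
    have hge : x w₂ ≤ A u w₂ * ((1/2 : ℝ) * x w₂) := by
      have h0 : (0:ℝ) ≤ (1/2) * x w₂ := by linarith [hx w₂]
      have := mul_le_mul_of_nonneg_right h2 h0
      linarith
    have hif : (if u = u then (1:ℝ) else 0) = 1 := if_pos rfl
    rw [hif, mul_one]
    rw [hcard] at hsum2
    linarith
  · simp only [if_neg hu, mul_zero, sub_zero]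
    rw [← hsum]
    refine Finset.sum_le_sum fun e _ => ?_
    split
    · calc wt s r w₁ w₂ e * x (r e) ≤ 1 * x (r e) :=
            mul_le_mul_of_nonneg_right (wt_le_one s r w₁ w₂ e) (hx _).le
        _ = x (r e) := one_mul _
    · exact le_refl 0

lemma opL_x_le (hA : ∀ v w, A v w = Nat.card {e : Edge // s e = v ∧ r e = w})
    (hx : ∀ v, 0 < x v) (hPF : ∀ v, ∑ w, A v w * x w = β * x v)
    (h2 : (2 : ℝ) ≤ A w₁ w₂) (u : V) :
    opL s r w₁ w₂ x u ≤ β * x u := by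
  have := opL_x_le' s r w₁ w₂ A β x hA hx hPF h2 u
  have h0 : 0 ≤ (x w₂) * (if u = w₁ then 1 else 0) := by
    by_cases h : u = w₁
    · simp [h, (hx w₂).le]
    · simp [h]
  linarith

lemma Lpow_x_le (hA : ∀ v w, A v w = Nat.card {e : Edge // s e = v ∧ r e = w})
    (hβ : 0 < β) (hx : ∀ v, 0 < x v) (hPF : ∀ v, ∑ w, A v w * x w = β * x v)
    (h2 : (2 : ℝ) ≤ A w₁ w₂) (n : ℕ) (u : V) :
    Lpow s r w₁ w₂ n x u ≤ β ^ n * x u := by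
  induction n generalizing u with
  | zero => simp [Lpow]
  | succ n ih =>
      show opL s r w₁ w₂ (Lpow s r w₁ w₂ n x) u ≤ _
      calc opL s r w₁ w₂ (Lpow s r w₁ w₂ n x) u
          ≤ opL s r w₁ w₂ (fun w => β ^ n * x w) u := opL_mono s r w₁ w₂ (fun w => ih w) u
        _ = β ^ n * opL s r w₁ w₂ x u := opL_smul s r w₁ w₂ _ x u
        _ ≤ β ^ n * (β * x u) := by
            refine mul_le_mul_of_nonneg_left ?_ (by positivity)
            exact opL_x_le s r w₁ w₂ A β x hA hx hPF h2 u
        _ = β ^ (n+1) * x u := by ring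

lemma exists_contraction [Nonempty V]
    (hA : ∀ v w, A v w = Nat.card {e : Edge // s e = v ∧ r e = w})
    (hirr : ∀ v w : V, ∃ k : ℕ, 0 < k ∧ 0 < (A ^ k) v w)
    (hβ : 0 < β) (hx : ∀ v, 0 < x v) (hPF : ∀ v, ∑ w, A v w * x w = β * x v)
    (h2 : (2 : ℝ) ≤ A w₁ w₂) :
    ∃ m : ℕ, 0 < m ∧ ∃ γ : ℝ, 0 ≤ γ ∧ γ < 1 ∧
      ∀ u, Lpow s r w₁ w₂ m x u ≤ γ * (β ^ m * x u) := by
  choose c hc0 hcpos using fun u => hirr u w₁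
  set m := (univ.sup c) + 1 with hm
  have hm0 : 0 < m := Nat.succ_pos _
  -- indicator of w₁
  set g : V → ℝ := fun w => if w = w₁ then 1 else 0 with hg
  have hg0 : ∀ w, 0 ≤ g w := fun w => by
    show (0:ℝ) ≤ if w = w₁ then 1 else 0
    by_cases h : w = w₁ <;> simp [h]
  have strict : ∀ u, Lpow s r w₁ w₂ m x u < β ^ m * x u := by
    intro u
    set j := c u with hj
    have hjle : j ≤ univ.sup c := Finset.le_sup (Finset.mem_univ u)
    set n' := m - j - 1 with hn'
    have hmeq : m = j + (1 + n') := by omega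
    -- step : opL (Lpow n' x) ≤ z pointwise
    set z : V → ℝ := fun w => β ^ (n' + 1) * x w - (β ^ n' * x w₂) * g w with hz
    have hstep : ∀ w, opL s r w₁ w₂ (Lpow s r w₁ w₂ n' x) w ≤ z w := by
      intro w
      calc opL s r w₁ w₂ (Lpow s r w₁ w₂ n' x) w
          ≤ opL s r w₁ w₂ (fun t => β ^ n' * x t) w :=
            opL_mono s r w₁ w₂
              (fun t => Lpow_x_le s r w₁ w₂ A β x hA hβ hx hPF h2 n' t) w
        _ = β ^ n' * opL s r w₁ w₂ x w := opL_smul s r w₁ w₂ _ x w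
        _ ≤ β ^ n' * (β * x w - x w₂ * g w) := by
            refine mul_le_mul_of_nonneg_left ?_ (by positivity)
            have := opL_x_le' s r w₁ w₂ A β x hA hx hPF h2 w
            rw [hg]; exact this
        _ = z w := by rw [hz]; ring
    have hsplit : Lpow s r w₁ w₂ m x u = Lpow s r w₁ w₂ j
        (opL s r w₁ w₂ (Lpow s r w₁ w₂ n' x)) u := by
      rw [hmeq, Lpow_add]
      congr 1
      rw [Lpow_add]
      rfl
    have hb1 : Lpow s r w₁ w₂ m x u ≤ Lpow s r w₁ w₂ j z u := by
      rw [hsplit]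
      exact Lpow_mono s r w₁ w₂ j hstep u
    have hb2 : Lpow s r w₁ w₂ j z u
        = β ^ (n' + 1) * Lpow s r w₁ w₂ j x u
          - (β ^ n' * x w₂) * Lpow s r w₁ w₂ j g u := by
      rw [hz]
      have : (fun w => β ^ (n' + 1) * x w - (β ^ n' * x w₂) * g w)
          = fun w => (fun t => β ^ (n' + 1) * x t) w - (fun t => (β ^ n' * x w₂) * g t) w := rfl
      rw [this, Lpow_sub, Lpow_smul, Lpow_smul]
    have hb3 : β ^ (n' + 1) * Lpow s r w₁ w₂ j x u ≤ β ^ m * x u := by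
      calc β ^ (n' + 1) * Lpow s r w₁ w₂ j x u
          ≤ β ^ (n' + 1) * (β ^ j * x u) := by
            refine mul_le_mul_of_nonneg_left ?_ (by positivity)
            exact Lpow_x_le s r w₁ w₂ A β x hA hβ hx hPF h2 j u
        _ = β ^ m * x u := by rw [hmeq]; ring
    have hb4 : 0 < Lpow s r w₁ w₂ j g u := by
      have h5 := Lpow_ge_half_pow s r w₁ w₂ A hA hg0 j u
      have h6 : ((A ^ j) *ᵥ g) u = (A ^ j) u w₁ := by
        rw [Matrix.mulVec, dotProduct]
        rw [Finset.sum_eq_single w₁]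
        · simp [hg]
        · intro t _ ht; simp [hg, ht]
        · intro h; exact absurd (Finset.mem_univ _) h
      have h7 : 0 < (1/2 : ℝ)^j * ((A ^ j) *ᵥ g) u := by
        rw [h6]; exact mul_pos (by positivity) (hcpos u)
      linarith
    have hpos : 0 < (β ^ n' * x w₂) * Lpow s r w₁ w₂ j g u :=
      mul_pos (mul_pos (pow_pos hβ n') (hx w₂)) hb4
    calc Lpow s r w₁ w₂ m x u ≤ Lpow s r w₁ w₂ j z u := hb1
      _ = β ^ (n' + 1) * Lpow s r w₁ w₂ j x u - (β ^ n' * x w₂) * Lpow s r w₁ w₂ j g u := hb2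
      _ < β ^ (n' + 1) * Lpow s r w₁ w₂ j x u := by linarith
      _ ≤ β ^ m * x u := hb3
  -- define γ as the max of the ratios
  have hne : (univ : Finset V).Nonempty := Finset.univ_nonempty
  set γ := univ.sup' hne (fun u => Lpow s r w₁ w₂ m x u / (β ^ m * x u)) with hγ
  refine ⟨m, hm0, γ, ?_, ?_, ?_⟩
  · obtain ⟨u⟩ := (inferInstance : Nonempty V)
    rw [hγ]
    refine le_trans ?_
      (Finset.le_sup' (fun u => Lpow s r w₁ w₂ m x u / (β ^ m * x u)) (Finset.mem_univ u))
    have h1 : 0 ≤ Lpow s r w₁ w₂ m x u := Lpow_nonneg s r w₁ w₂ m (fun w => (hx w).le) u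
    exact div_nonneg h1 (mul_pos (pow_pos hβ m) (hx u)).le
  · rw [hγ, Finset.sup'_lt_iff]
    intro u _
    rw [div_lt_one (mul_pos (pow_pos hβ m) (hx u))]
    exact strict u
  · intro u
    have h1 : Lpow s r w₁ w₂ m x u / (β ^ m * x u) ≤ γ := by
      rw [hγ]
      exact Finset.le_sup' (fun u => Lpow s r w₁ w₂ m x u / (β ^ m * x u)) (Finset.mem_univ u)
    rwa [div_le_iff₀ (mul_pos (pow_pos hβ m) (hx u))] at h1

end Eigen

lemma sum_pS_iterate (n : ℕ) : ∀ (k : ℕ) (y : V → ℝ),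
    ∑ u, pS s r w₁ w₂ (k + n) u * y u = ∑ u, pS s r w₁ w₂ k u * Lpow s r w₁ w₂ n y u := by
  induction n with
  | zero => intro k y; rfl
  | succ n ih =>
      intro k y
      have h1 : k + (n + 1) = (k + 1) + n := by omega
      rw [h1, ih (k+1) y, sum_pS_succ]
      rfl

lemma card_wt_le (k : ℕ) (v : V) (i : ℕ) :
    ((Nat.card {μ : Fin k → Edge // isPath s r k μ ∧ endsAt r k v μ ∧
        Nat.card {j : Fin k // s (μ j) = w₁ ∧ r (μ j) = w₂} = i}) : ℝ) * (1/2)^i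
      ≤ pS s r w₁ w₂ k v := by
  set P : (Fin k → Edge) → Prop := fun μ => isPath s r k μ ∧ endsAt r k v μ ∧
      Nat.card {j : Fin k // s (μ j) = w₁ ∧ r (μ j) = w₂} = i with hP
  have hcard : (Nat.card {μ : Fin k → Edge // P μ}) = (univ.filter P).card := by
    rw [Nat.card_eq_fintype_card, Fintype.card_subtype]
  have hterm : ∀ μ : Fin k → Edge, P μ →
      (if isPath s r k μ ∧ endsAt r k v μ then ∏ j, wt s r w₁ w₂ (μ j) else 0)
        = (1/2:ℝ)^i := by
    intro μ hμ
    rw [if_pos ⟨hμ.1, hμ.2.1⟩]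
    have hc2 : (univ.filter (fun j : Fin k => s (μ j) = w₁ ∧ r (μ j) = w₂)).card = i := by
      rw [← hμ.2.2, Nat.card_eq_fintype_card, Fintype.card_subtype]
    calc ∏ j, wt s r w₁ w₂ (μ j)
        = ∏ j : Fin k, (if s (μ j) = w₁ ∧ r (μ j) = w₂ then (1/2:ℝ) else 1) := rfl
      _ = ((univ.filter fun j : Fin k => s (μ j) = w₁ ∧ r (μ j) = w₂).prod fun _ => (1/2:ℝ))
            * ((univ.filter fun j : Fin k => ¬(s (μ j) = w₁ ∧ r (μ j) = w₂)).prod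
                fun _ => (1:ℝ)) := Finset.prod_ite _ _
      _ = (1/2:ℝ)^i := by rw [Finset.prod_const, Finset.prod_const_one, mul_one, hc2]
  calc ((Nat.card {μ : Fin k → Edge // P μ}) : ℝ) * (1/2)^i
      = ∑ μ ∈ univ.filter P,
          (if isPath s r k μ ∧ endsAt r k v μ then ∏ j, wt s r w₁ w₂ (μ j) else 0) := by
        rw [Finset.sum_congr rfl fun μ hμ => hterm μ (Finset.mem_filter.mp hμ).2,
          Finset.sum_const, nsmul_eq_mul, hcard]
    _ ≤ pS s r w₁ w₂ k v := by
        rw [pS]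
        refine Finset.sum_le_sum_of_subset_of_nonneg (Finset.filter_subset _ _)
          fun μ _ _ => ?_
        split
        · exact Finset.prod_nonneg fun j _ => (wt_pos s r w₁ w₂ (μ j)).le
        · exact le_refl 0


end Aux

theorem stmt1
    (V Edge : Type) [Fintype V] [DecidableEq V] [Fintype Edge]
    (s r : Edge → V)
    -- the adjacency matrix of the graph:
    (A : Matrix V V ℝ)
    (hA : ∀ v w, A v w = Nat.card {e : Edge // s e = v ∧ r e = w})
    -- `A` is irreducible:
    (hirr : ∀ v w : V, ∃ k : ℕ, 0 < k ∧ 0 < (A ^ k) v w)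
    -- `(β, x)` is a Perron–Frobenius pair for `A`:
    (β : ℝ) (x : V → ℝ) (hβ : 0 < β) (hx : ∀ v, 0 < x v)
    (hPF : ∀ v, ∑ w, A v w * x w = β * x v)
    (w₁ w₂ : V) (h2 : (2 : ℝ) ≤ A w₁ w₂)
    (v : V) (i : ℕ) :
    Tendsto
      (fun k : ℕ =>
        (Nat.card {μ : Fin k → Edge //
            -- `μ` is a path:
            (∀ (j : ℕ) (h : j + 1 < k), r (μ ⟨j, Nat.lt_of_succ_lt h⟩) = s (μ ⟨j + 1, h⟩)) ∧
            -- `μ` ends at `v`: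
            (∀ j : Fin k, j.val = k - 1 → r (μ j) = v) ∧
            -- exactly `i` of the edges of `μ` go from `w₁` to `w₂`:
            Nat.card {j : Fin k // s (μ j) = w₁ ∧ r (μ j) = w₂} = i} : ℝ) / β ^ k)
      atTop (nhds 0) := by
  have hV : Nonempty V := ⟨v⟩
  obtain ⟨m, hm0, γ, hγ0, hγ1, hcon⟩ :=
    exists_contraction s r w₁ w₂ A β x hA hirr hβ hx hPF h2
  set T : ℕ → ℝ := fun k => ∑ u, pS s r w₁ w₂ k u * x u with hT
  have hTnn : ∀ k, 0 ≤ T k := fun k =>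
    Finset.sum_nonneg fun u _ => mul_nonneg (pS_nonneg s r w₁ w₂ k u) (hx u).le
  have hTstep : ∀ k, T (k+1) ≤ β * T k := by
    intro k
    calc T (k+1) = ∑ u, pS s r w₁ w₂ k u * opL s r w₁ w₂ x u :=
          sum_pS_succ s r w₁ w₂ k x
      _ ≤ ∑ u, pS s r w₁ w₂ k u * (β * x u) := by
          refine Finset.sum_le_sum fun u _ => ?_
          exact mul_le_mul_of_nonneg_left
            (opL_x_le s r w₁ w₂ A β x hA hx hPF h2 u) (pS_nonneg s r w₁ w₂ k u)
      _ = β * T k := by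
          rw [hT, Finset.mul_sum]
          exact Finset.sum_congr rfl fun u _ => by ring
  have hTm : ∀ k, T (k+m) ≤ (γ * β ^ m) * T k := by
    intro k
    calc T (k+m) = ∑ u, pS s r w₁ w₂ k u * Lpow s r w₁ w₂ m x u :=
          sum_pS_iterate s r w₁ w₂ m k x
      _ ≤ ∑ u, pS s r w₁ w₂ k u * (γ * (β ^ m * x u)) := by
          refine Finset.sum_le_sum fun u _ => ?_
          exact mul_le_mul_of_nonneg_left (hcon u) (pS_nonneg s r w₁ w₂ k u)
      _ = (γ * β ^ m) * T k := by
          rw [hT, Finset.mul_sum]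
          exact Finset.sum_congr rfl fun u _ => by ring
  have hTr : ∀ kr, T kr ≤ β ^ kr * T 0 := by
    intro kr
    induction kr with
    | zero => simp
    | succ n ih =>
        calc T (n+1) ≤ β * T n := hTstep n
          _ ≤ β * (β ^ n * T 0) := mul_le_mul_of_nonneg_left ih hβ.le
          _ = β ^ (n+1) * T 0 := by ring
  have hTnm : ∀ (n kr : ℕ), T (m * n + kr) ≤ γ ^ n * (β ^ (m * n) * (β ^ kr * T 0)) := by
    intro n
    induction n with
    | zero => intro kr; simpa using hTr kr
    | succ n ih =>
        intro kr
        have h1 : m * (n + 1) + kr = (m * n + kr) + m := by ring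
        calc T (m * (n+1) + kr) = T ((m * n + kr) + m) := by rw [h1]
          _ ≤ (γ * β ^ m) * T (m * n + kr) := hTm _
          _ ≤ (γ * β ^ m) * (γ ^ n * (β ^ (m * n) * (β ^ kr * T 0))) := by
              refine mul_le_mul_of_nonneg_left (ih kr) ?_
              exact mul_nonneg hγ0 (by positivity)
          _ = γ ^ (n+1) * (β ^ (m * (n+1)) * (β ^ kr * T 0)) := by
              rw [pow_succ, show m * (n+1) = m * n + m from by ring, pow_add]
              ring
  -- pointwise bound on the normalized path count
  have hbound : ∀ k : ℕ,
      ((Nat.card {μ : Fin k → Edge //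
          (∀ (j : ℕ) (h : j + 1 < k), r (μ ⟨j, Nat.lt_of_succ_lt h⟩) = s (μ ⟨j + 1, h⟩)) ∧
          (∀ j : Fin k, j.val = k - 1 → r (μ j) = v) ∧
          Nat.card {j : Fin k // s (μ j) = w₁ ∧ r (μ j) = w₂} = i}) : ℝ) / β ^ k
        ≤ ((2:ℝ)^i * (T 0 / x v)) * γ ^ (k / m) := by
    intro k
    have hcw := card_wt_le s r w₁ w₂ k v i
    set N : ℝ := (Nat.card {μ : Fin k → Edge //
          (∀ (j : ℕ) (h : j + 1 < k), r (μ ⟨j, Nat.lt_of_succ_lt h⟩) = s (μ ⟨j + 1, h⟩)) ∧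
          (∀ j : Fin k, j.val = k - 1 → r (μ j) = v) ∧
          Nat.card {j : Fin k // s (μ j) = w₁ ∧ r (μ j) = w₂} = i} : ℝ) with hN
    have hNnn : 0 ≤ N := by rw [hN]; positivity
    have h1 : N ≤ 2^i * pS s r w₁ w₂ k v := by
      have hhalf : ((1:ℝ)/2)^i * 2^i = 1 := by
        rw [← mul_pow]; norm_num
      calc N = (N * (1/2)^i) * 2^i := by
            rw [mul_assoc, hhalf, mul_one]
        _ ≤ pS s r w₁ w₂ k v * 2^i := by
            refine mul_le_mul_of_nonneg_right ?_ (by positivity)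
            exact hcw
        _ = 2^i * pS s r w₁ w₂ k v := by ring
    have h2' : pS s r w₁ w₂ k v ≤ T k / x v := by
      rw [le_div_iff₀ (hx v)]
      refine Finset.single_le_sum (f := fun u => pS s r w₁ w₂ k u * x u)
        (fun u _ => mul_nonneg (pS_nonneg s r w₁ w₂ k u) (hx u).le) (Finset.mem_univ v)
    have h3 : T k ≤ γ ^ (k / m) * (β ^ k * T 0) := by
      have hk : k = m * (k / m) + k % m := (Nat.div_add_mod k m).symm
      have := hTnm (k / m) (k % m)
      rw [← hk] at this
      calc T k ≤ γ ^ (k/m) * (β ^ (m * (k/m)) * (β ^ (k % m) * T 0)) := this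
        _ = γ ^ (k / m) * (β ^ k * T 0) := by
            rw [show β ^ (m * (k/m)) * (β ^ (k % m) * T 0) = β ^ (m * (k/m) + k % m) * T 0 from
              by rw [pow_add]; ring, ← hk]
    have hβk : (0:ℝ) < β ^ k := pow_pos hβ k
    rw [div_le_iff₀ hβk]
    calc N ≤ 2^i * pS s r w₁ w₂ k v := h1
      _ ≤ 2^i * (T k / x v) := by
          refine mul_le_mul_of_nonneg_left h2' (by positivity)
      _ ≤ 2^i * ((γ ^ (k / m) * (β ^ k * T 0)) / x v) :=
          mul_le_mul_of_nonneg_left ((div_le_div_iff_of_pos_right (hx v)).mpr h3) (by positivity)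
      _ = ((2:ℝ)^i * (T 0 / x v)) * γ ^ (k / m) * β ^ k := by
          field_simp
  have hgl : Tendsto (fun k : ℕ => ((2:ℝ)^i * (T 0 / x v)) * γ ^ (k / m)) atTop (nhds 0) := by
    have h1 : Tendsto (fun n : ℕ => γ ^ n) atTop (nhds 0) :=
      tendsto_pow_atTop_nhds_zero_of_lt_one hγ0 hγ1
    have h2m : Tendsto (fun k : ℕ => k / m) atTop atTop := by
      refine Filter.tendsto_atTop_atTop.mpr fun b => ⟨b * m, fun k hk => ?_⟩
      exact (Nat.le_div_iff_mul_le hm0).mpr hk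
    have h3 := (h1.comp h2m).const_mul ((2:ℝ)^i * (T 0 / x v))
    simpa using h3
  refine squeeze_zero (fun k => ?_) hbound hgl
  exact div_nonneg (Nat.cast_nonneg _) (pow_pos hβ k).le
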